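/- arXiv:2602.07545 — 4 statements merged into one kernel-verified Lean document; each statement's English description precedes it below -/
import Mathlib

section
/- Let 𝒜 ⊆ ℤ[ω] be a finite set of Eisenstein integers, and let π be an Eisenstein prime with odd norm. Then there exists a subset ℬ ⊆ 𝒜 with |ℬ| ≥ |𝒜|/2 such that for all a, b ∈ ℬ and all natural numbers α: π^α divides a + b if and only if π^α divides both a and b. -/
noncomputable def ω : ℂ := (-1 + Complex.I * Real.sqrt 3) / 2

lemma omega_sq : ω ^ 2 = -1 - ω := by
  have h3 : (Complex.I * (Real.sqrt 3 : ℝ)) ^ 2 = -3 := by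
    rw [mul_pow, Complex.I_sq]
    norm_cast
    rw [Real.sq_sqrt (by norm_num : (3:ℝ) ≥ 0)]
    norm_num
  unfold ω
  linear_combination h3 / 4

lemma conj_omega : (starRingEnd ℂ) ω = -1 - ω := by
  unfold ω
  simp only [map_div₀, map_add, map_mul, Complex.conj_I, map_neg, map_one, Complex.conj_ofReal,
    map_ofNat]
  ring

noncomputable def E : Subring ℂ := Subring.closure {ω}

lemma omega_mem : ω ∈ E := Subring.subset_closure rfl

noncomputable def T : Subring ℂ where
  carrier := {x | ∃ m n : ℤ, x = (m : ℂ) + n * ω}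
  zero_mem' := ⟨0, 0, by push_cast; ring⟩
  one_mem' := ⟨1, 0, by push_cast; ring⟩
  add_mem' := by
    rintro x y ⟨m, n, rfl⟩ ⟨p, q, rfl⟩
    exact ⟨m + p, n + q, by push_cast; ring⟩
  neg_mem' := by
    rintro x ⟨m, n, rfl⟩
    exact ⟨-m, -n, by push_cast; ring⟩
  mul_mem' := by
    rintro x y ⟨m, n, rfl⟩ ⟨p, q, rfl⟩
    refine ⟨m * p - n * q, m * q + n * p - n * q, ?_⟩
    push_cast
    linear_combination ((n : ℂ) * q) * omega_sq

lemma E_repr (x : E) : ∃ m n : ℤ, (x : ℂ) = (m : ℂ) + n * ω := by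
  have hle : E ≤ T := Subring.closure_le.mpr (by
    intro z hz
    rw [Set.mem_singleton_iff] at hz
    exact hz ▸ ⟨0, 1, by push_cast; ring⟩)
  exact hle x.2

lemma normSq_repr (x : E) (m n : ℤ) (h : (x : ℂ) = (m : ℂ) + n * ω) :
    Complex.normSq (x : ℂ) = ((m ^ 2 - m * n + n ^ 2 : ℤ) : ℝ) := by
  have hc : ((Complex.normSq (x : ℂ) : ℝ) : ℂ) = (((m ^ 2 - m * n + n ^ 2 : ℤ) : ℝ) : ℂ) := by
    rw [← Complex.mul_conj]
    rw [h, map_add, map_mul, conj_omega]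
    simp only [map_intCast]
    push_cast
    linear_combination (-(n : ℂ) ^ 2) * omega_sq
  exact_mod_cast hc

def negSetoid (R : Type*) [Ring R] : Setoid R where
  r a b := b = a ∨ b = -a
  iseqv := by
    constructor
    · intro a; exact Or.inl rfl
    · rintro a b (rfl | rfl)
      · exact Or.inl rfl
      · exact Or.inr (neg_neg a).symm
    · rintro a b c (rfl | rfl) (rfl | rfl)
      · exact Or.inl rfl
      · exact Or.inr rfl
      · exact Or.inr rfl
      · exact Or.inl (neg_neg a)

set_option maxHeartbeats 2000000 in
set_option synthInstance.maxHeartbeats 200000 in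
theorem stmt_10 (𝒜 : Finset E) (π : E) (hπ : Prime π)
    (hodd : ∃ n : ℤ, Odd n ∧ Complex.normSq (π : ℂ) = (n : ℝ)) :
    ∃ ℬ ⊆ 𝒜, (𝒜.card : ℝ) / 2 ≤ (ℬ.card : ℝ) ∧
      ∀ a ∈ ℬ, ∀ b ∈ ℬ, ∀ α : ℕ,
        (π ^ α ∣ a + b ↔ (π ^ α ∣ a ∧ π ^ α ∣ b)) := by
  classical
  -- an integer-valued norm
  have hNex : ∀ x : E, ∃ k : ℤ, Complex.normSq (x : ℂ) = (k : ℝ) := fun x => by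
    obtain ⟨m, n, h⟩ := E_repr x
    exact ⟨_, normSq_repr x m n h⟩
  choose N hN using hNex
  have hNval : ∀ (x : E) (m n : ℤ), (x : ℂ) = (m : ℂ) + n * ω →
      N x = m ^ 2 - m * n + n ^ 2 := by
    intro x m n h
    have h1 := (hN x).symm.trans (normSq_repr x m n h)
    exact_mod_cast h1
  have hNnonneg : ∀ x : E, 0 ≤ N x := fun x => by
    have h := Complex.normSq_nonneg (x : ℂ)
    rw [hN x] at h
    exact_mod_cast h
  have hNpos : ∀ x : E, x ≠ 0 → 1 ≤ N x := by
    intro x hx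
    have hx' : (x : ℂ) ≠ 0 := fun h => hx (Subtype.ext h)
    have h := Complex.normSq_pos.mpr hx'
    rw [hN x] at h
    have : (0 : ℤ) < N x := by exact_mod_cast h
    omega
  have hNmul : ∀ x y : E, N (x * y) = N x * N y := by
    intro x y
    have h : Complex.normSq (((x * y : E)) : ℂ) = Complex.normSq (x : ℂ) * Complex.normSq (y : ℂ) := by
      push_cast
      exact Complex.normSq_mul _ _
    rw [hN (x * y), hN x, hN y] at h
    exact_mod_cast h
  have hNone : N 1 = 1 := by
    have := hNval 1 1 0 (by push_cast; ring)
    simpa using this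
  have hNpow : ∀ (x : E) (k : ℕ), N (x ^ k) = N x ^ k := by
    intro x k
    induction k with
    | zero => simpa using hNone
    | succ k ih => rw [pow_succ, hNmul, ih, pow_succ]
  have hπ0 : π ≠ 0 := hπ.ne_zero
  -- N π is odd and at least 3
  obtain ⟨nd, hnodd, hnval⟩ := hodd
  have hNπ : N π = nd := by
    have := (hN π).symm.trans hnval
    exact_mod_cast this
  have hNπodd : Odd (N π) := hNπ ▸ hnodd
  have hNπ1 : N π ≠ 1 := by
    intro h1
    obtain ⟨m, n, hx⟩ := E_repr π
    have hval := hNval π m n hx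
    have hcmem : ((m - n : ℤ) : ℂ) + ((-n : ℤ) : ℂ) * ω ∈ E :=
      add_mem (intCast_mem E _) (mul_mem (intCast_mem E _) omega_mem)
    set c : E := ⟨((m - n : ℤ) : ℂ) + ((-n : ℤ) : ℂ) * ω, hcmem⟩ with hc
    have hmul : π * c = 1 := by
      apply Subtype.ext
      show (π : ℂ) * (c : ℂ) = 1
      have hcval : (c : ℂ) = ((m - n : ℤ) : ℂ) + ((-n : ℤ) : ℂ) * ω := rfl
      rw [hx, hcval]
      have key : ((m : ℂ) + n * ω) * (((m - n : ℤ) : ℂ) + ((-n : ℤ) : ℂ) * ω)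
          = ((m ^ 2 - m * n + n ^ 2 : ℤ) : ℂ) := by
        push_cast
        linear_combination (-(n : ℂ) ^ 2) * omega_sq
      rw [key, ← hval, h1]
      norm_num
    exact hπ.not_isUnit (IsUnit.of_mul_eq_one _ hmul)
  have hNπ3 : 3 ≤ N π := by
    obtain ⟨t, ht⟩ := hNπodd
    have h0 : 0 ≤ N π := hNnonneg π
    have h1 : 1 ≤ N π := hNpos π hπ0
    omega
  -- π does not divide 2
  have hπ2 : ¬ π ∣ (2 : E) := by
    rintro ⟨d, hd⟩
    have h4 : N 2 = 4 := by
      have := hNval 2 2 0 (by push_cast [show ((2:E):ℂ) = 2 from rfl]; ring)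
      simpa using this
    have hm := hNmul π d
    rw [← hd, h4] at hm
    have hdle : N π ≤ 4 := Int.le_of_dvd (by norm_num) ⟨N d, hm⟩
    obtain ⟨t, ht⟩ := hNπodd
    have hd1 : 1 ≤ N d := hNpos d (by rintro rfl; rw [mul_zero] at hd; norm_num at hd)
    -- N π odd, 3 ≤ N π ≤ 4 so N π = 3, but 4 = 3 * N d impossible
    have : N π = 3 := by omega
    rw [this] at hm
    omega
  -- finiteness of π-adic valuation
  have hfin : ∀ a : E, a ≠ 0 → ∃ k : ℕ, ¬ π ^ k ∣ a := by
    intro a ha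
    set t := (N a).toNat with htdef
    refine ⟨t + 1, ?_⟩
    rintro ⟨c, hc⟩
    have hc0 : c ≠ 0 := by rintro rfl; rw [mul_zero] at hc; exact ha hc
    have h1 : N a = N π ^ (t + 1) * N c := by rw [hc, hNmul, hNpow]
    have hc1 : 1 ≤ N c := hNpos c hc0
    have hp1 : (3 : ℤ) ^ (t + 1) ≤ N π ^ (t + 1) :=
      pow_le_pow_left₀ (by norm_num) hNπ3 _
    have hlt : (t : ℤ) < 3 ^ (t + 1) := by
      have hn : t < 3 ^ (t + 1) := by
        calc t < 2 ^ t := Nat.lt_two_pow_self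
        _ ≤ 3 ^ t := Nat.pow_le_pow_left (by norm_num) t
        _ ≤ 3 ^ (t + 1) := Nat.pow_le_pow_right (by norm_num) (Nat.le_succ t)
      exact_mod_cast hn
    have hta : (t : ℤ) = N a := by
      rw [htdef]; exact Int.toNat_of_nonneg (hNnonneg a)
    nlinarith [pow_nonneg (by norm_num : (0:ℤ) ≤ 3) (t+1)]
  -- factor out the π-part
  have hfac : ∀ a : E, a ≠ 0 → ∃ γ : ℕ, ∃ c : E, a = π ^ γ * c ∧ ¬ π ∣ c := by
    intro a ha
    have hex := hfin a ha
    have hk0 : Nat.find hex ≠ 0 := by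
      intro h
      have := Nat.find_spec hex
      rw [h, pow_zero] at this
      exact this (one_dvd a)
    obtain ⟨γ, hγ⟩ : ∃ γ, Nat.find hex = γ + 1 :=
      ⟨Nat.find hex - 1, (Nat.succ_pred_eq_of_pos (Nat.pos_of_ne_zero hk0)).symm⟩
    have h1 : π ^ γ ∣ a := by
      by_contra h
      exact absurd h (not_not.mpr (by
        have := Nat.find_min hex (by omega : γ < Nat.find hex)
        exact not_not.mp (by simpa using this)))
    obtain ⟨c, hcd⟩ := h1
    refine ⟨γ, c, hcd, ?_⟩
    rintro ⟨d, rfl⟩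
    have : π ^ (γ + 1) ∣ a := ⟨d, by rw [hcd]; ring⟩
    rw [← hγ] at this
    exact Nat.find_spec hex this
  choose! γf cf hfe hfnd using hfac
  -- the quotient ring mod π
  set I : Ideal E := Ideal.span {π} with hIdef
  haveI hIp : I.IsPrime := (Ideal.span_singleton_prime hπ0).mpr hπ
  have hmk0 : ∀ x : E, Ideal.Quotient.mk I x = 0 ↔ π ∣ x := fun x => by
    rw [Ideal.Quotient.eq_zero_iff_mem, hIdef, Ideal.mem_span_singleton]
  have h2R : (2 : E ⧸ I) ≠ 0 := by
    have : ((2 : E ⧸ I)) = Ideal.Quotient.mk I 2 := by push_cast; rfl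
    rw [this, Ne, hmk0]
    exact hπ2
  -- the sign set
  set st := negSetoid (E ⧸ I) with hst
  set S : Set (E ⧸ I) := {r | (Quotient.mk st r).out = r} with hS
  have hout : ∀ r : E ⧸ I, (Quotient.mk st r).out = r ∨ (Quotient.mk st r).out = -r := by
    intro r
    have h := Quotient.exact ((Quotient.mk st r).out_eq)
    rcases h with h | h
    · left; exact h.symm
    · right; nth_rewrite 2 [h]; rw [neg_neg]
  have hmkneg : ∀ r : E ⧸ I, Quotient.mk st (-r) = Quotient.mk st r := by
    intro r
    exact Quotient.sound (Or.inr (neg_neg r).symm)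
  have hr2 : ∀ r : E ⧸ I, r ≠ 0 → r ≠ -r := by
    intro r hr h
    have h2 : (2 : E ⧸ I) * r = 0 := by
      rw [two_mul]
      nth_rewrite 1 [h]
      ring
    rcases mul_eq_zero.mp h2 with h' | h'
    · exact h2R h'
    · exact hr h'
  have hSor : ∀ r : E ⧸ I, r ≠ 0 → (r ∈ S ∨ -r ∈ S) := by
    intro r hr
    rcases hout r with h | h
    · left; exact h
    · right
      show (Quotient.mk st (-r)).out = -r
      rw [hmkneg, h]
  have hSnot : ∀ r : E ⧸ I, r ≠ 0 → ¬(r ∈ S ∧ -r ∈ S) := by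
    rintro r hr ⟨h1, h2⟩
    have h2' : (Quotient.mk st (-r)).out = -r := h2
    rw [hmkneg] at h2'
    exact hr2 r hr (h1.symm.trans h2')
  -- classes of the cofactors
  set q : E → E ⧸ I := fun a => Ideal.Quotient.mk I (cf a) with hqdef
  have hq0 : ∀ a : E, a ≠ 0 → q a ≠ 0 := by
    intro a ha h
    exact hfnd a ha ((hmk0 (cf a)).mp h)
  -- key divisibility lemma
  have hkey : ∀ a b : E, a ≠ 0 → b ≠ 0 → q a + q b ≠ 0 → γf a ≤ γf b →
      ∀ α : ℕ, π ^ α ∣ a + b → α ≤ γf a := by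
    intro a b ha hb hq hγ α hd
    obtain ⟨k, hk⟩ : ∃ k, γf b = γf a + k := ⟨γf b - γf a, (Nat.add_sub_cancel' hγ).symm⟩
    have habe : a + b = π ^ γf a * (cf a + π ^ k * cf b) := by
      conv_lhs => rw [hfe a ha, hfe b hb]
      rw [hk, pow_add]
      ring
    set e : E := cf a + π ^ k * cf b with hedef
    have hnde : ¬ π ∣ e := by
      intro hdvd
      have hz : Ideal.Quotient.mk I e = 0 := (hmk0 e).mpr hdvd
      rw [hedef, RingHom.map_add, RingHom.map_mul, RingHom.map_pow] at hz
      rcases Nat.eq_zero_or_pos k with hc | hc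
      · rw [hc, pow_zero, one_mul] at hz
        exact hq hz
      · have hmkπ : Ideal.Quotient.mk I π = 0 := (hmk0 π).mpr dvd_rfl
        rw [hmkπ, zero_pow hc.ne', zero_mul, add_zero] at hz
        exact hq0 a ha hz
    rw [habe] at hd
    by_contra hlt
    push_neg at hlt
    have hdd : π ^ (γf a + 1) ∣ π ^ γf a * e := dvd_trans (pow_dvd_pow π hlt) hd
    rw [pow_succ] at hdd
    obtain ⟨u, hu⟩ := hdd
    have : π ∣ e := ⟨u, mul_left_cancel₀ (pow_ne_zero (γf a) hπ0) (by rw [hu]; ring)⟩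
    exact hnde this
  -- main pairwise property
  have hmain : ∀ a b : E, (a = 0 ∨ b = 0 ∨ q a + q b ≠ 0) → ∀ α : ℕ,
      (π ^ α ∣ a + b ↔ (π ^ α ∣ a ∧ π ^ α ∣ b)) := by
    intro a b hcase α
    constructor
    · intro hd
      by_cases ha : a = 0
      · subst ha
        rw [zero_add] at hd
        exact ⟨dvd_zero _, hd⟩
      by_cases hb : b = 0
      · subst hb
        rw [add_zero] at hd
        exact ⟨hd, dvd_zero _⟩
      have hq : q a + q b ≠ 0 := (hcase.resolve_left ha).resolve_left hb
      rcases le_total (γf a) (γf b) with h | h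
      · have hα := hkey a b ha hb hq h α hd
        refine ⟨dvd_trans (pow_dvd_pow π hα) ⟨cf a, hfe a ha⟩, ?_⟩
        exact dvd_trans (pow_dvd_pow π (le_trans hα h)) ⟨cf b, hfe b hb⟩
      · have hq' : q b + q a ≠ 0 := by rwa [add_comm]
        have hd' : π ^ α ∣ b + a := by rwa [add_comm]
        have hα := hkey b a hb ha hq' h α hd'
        refine ⟨dvd_trans (pow_dvd_pow π (le_trans hα h)) ⟨cf a, hfe a ha⟩, ?_⟩
        exact dvd_trans (pow_dvd_pow π hα) ⟨cf b, hfe b hb⟩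
    · rintro ⟨h1, h2⟩
      exact dvd_add h1 h2
  -- splitting into two halves
  set B1 : Finset E := 𝒜.filter (fun a => a = 0 ∨ q a ∈ S) with hB1
  set B2 : Finset E := 𝒜.filter (fun a => a = 0 ∨ q a ∉ S) with hB2
  have hcov : 𝒜 ⊆ B1 ∪ B2 := by
    intro a ha
    by_cases h : q a ∈ S
    · exact Finset.mem_union_left _ (Finset.mem_filter.mpr ⟨ha, Or.inr h⟩)
    · exact Finset.mem_union_right _ (Finset.mem_filter.mpr ⟨ha, Or.inr h⟩)
  have hcard : 𝒜.card ≤ B1.card + B2.card :=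
    le_trans (Finset.card_le_card hcov) (Finset.card_union_le _ _)
  -- property holds inside each half
  have hgood1 : ∀ a ∈ B1, ∀ b ∈ B1, ∀ α : ℕ,
      (π ^ α ∣ a + b ↔ (π ^ α ∣ a ∧ π ^ α ∣ b)) := by
    intro a haB b hbB α
    apply hmain
    by_cases ha : a = 0
    · exact Or.inl ha
    by_cases hb : b = 0
    · exact Or.inr (Or.inl hb)
    right; right
    intro h0
    have hsa : q a ∈ S := ((Finset.mem_filter.mp haB).2).resolve_left ha
    have hsb : q b ∈ S := ((Finset.mem_filter.mp hbB).2).resolve_left hb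
    have hqb : q b = -(q a) := by linear_combination h0
    exact hSnot (q a) (hq0 a ha) ⟨hsa, hqb ▸ hsb⟩
  have hgood2 : ∀ a ∈ B2, ∀ b ∈ B2, ∀ α : ℕ,
      (π ^ α ∣ a + b ↔ (π ^ α ∣ a ∧ π ^ α ∣ b)) := by
    intro a haB b hbB α
    apply hmain
    by_cases ha : a = 0
    · exact Or.inl ha
    by_cases hb : b = 0
    · exact Or.inr (Or.inl hb)
    right; right
    intro h0
    have hsa : q a ∉ S := ((Finset.mem_filter.mp haB).2).resolve_left ha
    have hsb : q b ∉ S := ((Finset.mem_filter.mp hbB).2).resolve_left hb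
    have hqb : q b = -(q a) := by linear_combination h0
    rcases hSor (q a) (hq0 a ha) with h | h
    · exact hsa h
    · exact hsb (hqb ▸ h)
  -- choose the larger half
  rcases le_total B1.card B2.card with h | h
  · refine ⟨B2, Finset.filter_subset _ _, ?_, hgood2⟩
    have h2 : 𝒜.card ≤ 2 * B2.card := by omega
    have : (𝒜.card : ℝ) ≤ 2 * (B2.card : ℝ) := by exact_mod_cast h2
    linarith
  · refine ⟨B1, Finset.filter_subset _ _, ?_, hgood1⟩
    have h2 : 𝒜.card ≤ 2 * B1.card := by omega
    have : (𝒜.card : ℝ) ≤ 2 * (B1.card : ℝ) := by exact_mod_cast h2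
    linarith
end

section
/- If 𝒜 ⊆ ℤ⁺ is a finite nonempty set, then the number of distinct rational primes dividing ∏_{a,b ∈ 𝒜, a ≠ b} (a² − ab + b²) is strictly greater than (log|𝒜| − log 38)/(2·log 3). -/
private lemma zmod2_no_root : ∀ z : ZMod 2, z ^ 2 - z + 1 ≠ 0 := by decide

lemma exists_coloring (q : ℕ) (hq : q.Prime) :
    ∃ c : ZMod q → Bool, ∀ x y : ZMod q, x ≠ 0 → y ≠ 0 →
      x ^ 2 - x * y + y ^ 2 = 0 → c x ≠ c y := by
  classical
  haveI : Fact q.Prime := ⟨hq⟩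
  by_cases hroot : ∃ z : ZMod q, z ^ 2 - z + 1 = 0
  · obtain ⟨ζ, hζ⟩ := hroot
    have hζ0 : ζ ≠ 0 := by
      intro h
      rw [h] at hζ
      norm_num at hζ
    have hm1 : (-1 : ZMod q) ≠ 1 := by
      intro h
      have h2 : ((2 : ℕ) : ZMod q) = 0 := by push_cast; linear_combination -h
      have hq2 : q = 2 :=
        (Nat.prime_dvd_prime_iff_eq hq Nat.prime_two).mp
          ((ZMod.natCast_eq_zero_iff 2 q).mp h2)
      subst hq2
      exact zmod2_no_root ζ hζ
    obtain ⟨Z, hZ⟩ := hζ0.isUnit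
    have h3 : ζ ^ 3 = -1 := by linear_combination (ζ + 1) * hζ
    have hZ3 : Z ^ 3 = -1 := by
      ext
      push_cast [hZ]
      exact h3
    have hneg1 : ((-1 : (ZMod q)ˣ) : ZMod q) = -1 := by push_cast; ring
    have hZ1ne : (-1 : (ZMod q)ˣ) ≠ 1 := by
      intro h
      apply hm1
      rw [← hneg1, h, Units.val_one]
    have hpar : ∀ m : ℤ, Z ^ m = 1 → Even m := by
      intro m hm
      by_contra hodd'
      have hs : Odd m := Int.not_even_iff_odd.mp hodd'
      obtain ⟨k, hk⟩ := hs
      apply hZ1ne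
      have h1 : Z ^ (3 * m) = 1 := by
        rw [mul_comm, zpow_mul]
        rw [hm]
        exact one_zpow 3
      have h2 : Z ^ (3 * m) = -1 := by
        rw [zpow_mul]
        have hz3 : Z ^ (3 : ℤ) = -1 := by
          rw [show (3 : ℤ) = (3 : ℕ) by norm_num, zpow_natCast, hZ3]
        rw [hz3, hk]
        rw [zpow_add, zpow_mul]
        rw [show ((-1 : (ZMod q)ˣ) ^ (2 : ℤ)) = 1 by
          rw [show (2:ℤ) = ((2:ℕ) : ℤ) by norm_num, zpow_natCast]
          exact neg_one_sq]
        rw [one_zpow, zpow_one, one_mul]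
      rw [h1] at h2
      exact h2.symm
    set H : Subgroup (ZMod q)ˣ := Subgroup.zpowers Z with hH
    set P : (ZMod q)ˣ → Prop :=
      fun u => ∃ k : ℤ, ((QuotientGroup.mk u : (ZMod q)ˣ ⧸ H)).out⁻¹ * u = Z ^ (2 * k)
      with hP
    -- key step: adjacent units (ratio Z) have opposite P-values
    have hkey : ∀ xu yu : (ZMod q)ˣ, xu = Z * yu → (P xu ↔ ¬ P yu) := by
      intro xu yu hxy
      have hcoset : (QuotientGroup.mk xu : (ZMod q)ˣ ⧸ H) = QuotientGroup.mk yu := by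
        rw [QuotientGroup.eq, hxy]
        have : (Z * yu)⁻¹ * yu = Z⁻¹ := by
          rw [mul_inv_rev, mul_assoc, mul_comm Z⁻¹ yu, ← mul_assoc,
            inv_mul_cancel, one_mul]
        rw [this, hH]
        rw [show (Z⁻¹ : (ZMod q)ˣ) = Z ^ (-1 : ℤ) by rw [zpow_neg, zpow_one]]
        exact Subgroup.zpow_mem _ (Subgroup.mem_zpowers Z) _
      set r := ((QuotientGroup.mk yu : (ZMod q)ˣ ⧸ H)).out with hr
      have hrmem : r⁻¹ * yu ∈ H := by
        rw [← QuotientGroup.eq, hr, QuotientGroup.out_eq']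
      obtain ⟨m, hm⟩ := Subgroup.mem_zpowers_iff.mp hrmem
      have hXval : r⁻¹ * xu = Z ^ (m + 1) := by
        rw [hxy, mul_left_comm, ← hm, zpow_add, zpow_one, mul_comm]
      constructor
      · rintro ⟨k, hk⟩ ⟨k', hk'⟩
        rw [hcoset, ← hr] at hk
        rw [hXval] at hk
        rw [← hr, ← hm] at hk'
        have e1 : Z ^ (m + 1 - 2 * k) = 1 := by
          rw [zpow_sub, hk, mul_inv_cancel]
        have e2 : Z ^ (m - 2 * k') = 1 := by
          rw [zpow_sub, ← hk', hm, mul_inv_cancel]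
        obtain ⟨j1, hj1⟩ := hpar _ e1
        obtain ⟨j2, hj2⟩ := hpar _ e2
        omega
      · intro hnPy
        rcases Int.even_or_odd m with ⟨j, hj⟩ | ⟨j, hj⟩
        · exfalso
          apply hnPy
          refine ⟨j, ?_⟩
          rw [← hr, ← hm, hj]
          congr 1
          ring
        · refine ⟨j + 1, ?_⟩
          rw [hcoset, ← hr, hXval, hj]
          congr 1
          ring
    refine ⟨fun x => if h : IsUnit x then decide (P h.unit) else false, ?_⟩
    intro x y hx0 hy0 hrel
    have hxu : IsUnit x := hx0.isUnit
    have hyu : IsUnit y := hy0.isUnit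
    have hζinv : ζ * (1 - ζ) = 1 := by linear_combination -hζ
    have hfact : (x - ζ * y) * (x - (1 - ζ) * y) = 0 := by
      linear_combination hrel - y ^ 2 * hζ
    simp only [dif_pos hxu, dif_pos hyu, ne_eq, decide_eq_decide]
    rcases mul_eq_zero.mp hfact with h | h
    · -- x = ζ y
      have hux : hxu.unit = Z * hyu.unit := by
        ext
        push_cast [hZ]
        simp only [IsUnit.unit_spec]
        linear_combination h
      rw [hkey _ _ hux]
      tauto
    · -- y = ζ x
      have huy : hyu.unit = Z * hxu.unit := by
        ext
        push_cast [hZ]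
        simp only [IsUnit.unit_spec]
        have hyx : y = ζ * x := by
          have h1 : x = (1 - ζ) * y := by linear_combination h
          have : ζ * x = ζ * ((1 - ζ) * y) := by rw [h1]
          rw [← mul_assoc, hζinv, one_mul] at this
          exact this.symm
        linear_combination hyx
      rw [hkey _ _ huy]
      tauto
  · refine ⟨fun _ => false, ?_⟩
    intro x y hx0 hy0 hrel
    exfalso
    apply hroot
    refine ⟨x * y⁻¹, ?_⟩
    have hy' : y * y⁻¹ = 1 := mul_inv_cancel₀ hy0
    field_simp
    linear_combination hrel

private lemma mul_le_sq_add_sq (X Y : ℕ) : X * Y ≤ X ^ 2 + Y ^ 2 := by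
  have h := two_mul_le_add_sq (X : ℤ) (Y : ℤ)
  have h2 : (0 : ℤ) ≤ (X : ℤ) * Y := by positivity
  have : (X : ℤ) * Y ≤ (X : ℤ) ^ 2 + (Y : ℤ) ^ 2 := by nlinarith
  exact_mod_cast this

lemma key_arith (A B : ℕ) (hA : 0 < A) (hB : 0 < B) (hne : A ≠ B) :
    ∃ q : ℕ, q.Prime ∧ q ∣ (A ^ 2 + B ^ 2 - A * B) ∧
      ¬ q ∣ (A / q ^ A.factorization q) ∧ ¬ q ∣ (B / q ^ B.factorization q) ∧
      ((A / q ^ A.factorization q : ℕ) : ZMod q) ^ 2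
        - ((A / q ^ A.factorization q : ℕ) : ZMod q) * ((B / q ^ B.factorization q : ℕ) : ZMod q)
        + ((B / q ^ B.factorization q : ℕ) : ZMod q) ^ 2 = 0 := by
  set g := Nat.gcd A B with hgdef
  have hg : 0 < g := Nat.gcd_pos_of_pos_left _ hA
  set A' := A / g with hA'def
  set B' := B / g with hB'def
  have hAg : g ∣ A := Nat.gcd_dvd_left A B
  have hBg : g ∣ B := Nat.gcd_dvd_right A B
  have hA'' : A = g * A' := (Nat.mul_div_cancel' hAg).symm
  have hB'' : B = g * B' := (Nat.mul_div_cancel' hBg).symm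
  have hA'pos : 0 < A' := Nat.div_pos (Nat.le_of_dvd hA hAg) hg
  have hB'pos : 0 < B' := Nat.div_pos (Nat.le_of_dvd hB hBg) hg
  have cop : Nat.Coprime A' B' := Nat.coprime_div_gcd_div_gcd hg
  have hne' : A' ≠ B' := by
    intro h
    exact hne (by rw [hA'', hB'', h])
  set W := A' ^ 2 + B' ^ 2 - A' * B' with hWdef
  have hle' : A' * B' ≤ A' ^ 2 + B' ^ 2 := mul_le_sq_add_sq A' B'
  have hWcast : (W : ℤ) = (A' : ℤ) ^ 2 + (B' : ℤ) ^ 2 - (A' : ℤ) * B' := by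
    rw [hWdef]
    push_cast [Nat.cast_sub hle']
    ring
  have hW2 : 2 ≤ W := by
    have hd : (A' : ℤ) - B' ≠ 0 := sub_ne_zero.mpr (by exact_mod_cast hne')
    have h1 : 1 ≤ ((A' : ℤ) - B') ^ 2 := by
      have := Int.one_le_abs hd
      nlinarith [sq_abs ((A' : ℤ) - B')]
    have h2 : 1 ≤ (A' : ℤ) * B' := by
      have := Nat.mul_pos hA'pos hB'pos
      exact_mod_cast this
    have : (2 : ℤ) ≤ (W : ℤ) := by rw [hWcast]; nlinarith
    exact_mod_cast this
  obtain ⟨q, hq, hqW⟩ := Nat.exists_prime_and_dvd (by omega : W ≠ 1)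
  haveI : Fact q.Prime := ⟨hq⟩
  haveI : NeZero q := ⟨hq.ne_zero⟩
  have hqWZ : (q : ℤ) ∣ (W : ℤ) := Int.natCast_dvd_natCast.mpr hqW
  have hqA' : ¬ q ∣ A' := by
    intro hdvd
    have hdZ : (q : ℤ) ∣ (A' : ℤ) := Int.natCast_dvd_natCast.mpr hdvd
    have h1 : (q : ℤ) ∣ (B' : ℤ) ^ 2 := by
      have hrw : (B' : ℤ) ^ 2 = (W : ℤ) - (A' : ℤ) ^ 2 + (A' : ℤ) * B' := by
        rw [hWcast]; ring
      rw [hrw]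
      exact dvd_add (dvd_sub hqWZ (dvd_pow hdZ two_ne_zero)) (hdZ.mul_right _)
    have h2 : q ∣ B' ^ 2 := by exact_mod_cast h1
    have h3 : q ∣ B' := hq.dvd_of_dvd_pow h2
    have h4 : q ∣ 1 := cop ▸ Nat.dvd_gcd hdvd h3
    have := Nat.le_of_dvd one_pos h4
    have := hq.two_le
    omega
  have hqB' : ¬ q ∣ B' := by
    intro hdvd
    have hdZ : (q : ℤ) ∣ (B' : ℤ) := Int.natCast_dvd_natCast.mpr hdvd
    have h1 : (q : ℤ) ∣ (A' : ℤ) ^ 2 := by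
      have hrw : (A' : ℤ) ^ 2 = (W : ℤ) - (B' : ℤ) ^ 2 + (A' : ℤ) * B' := by
        rw [hWcast]; ring
      rw [hrw]
      exact dvd_add (dvd_sub hqWZ (dvd_pow hdZ two_ne_zero)) (hdZ.mul_left _)
    have h2 : q ∣ A' ^ 2 := by exact_mod_cast h1
    have h3 : q ∣ A' := hq.dvd_of_dvd_pow h2
    have h4 : q ∣ 1 := cop ▸ Nat.dvd_gcd h3 hdvd
    have := Nat.le_of_dvd one_pos h4
    have := hq.two_le
    omega
  -- factorization facts
  have hfA : A.factorization q = g.factorization q := by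
    rw [hA'', Nat.factorization_mul hg.ne' hA'pos.ne']
    simp [Nat.factorization_eq_zero_of_not_dvd hqA']
  have hfB : B.factorization q = g.factorization q := by
    rw [hB'', Nat.factorization_mul hg.ne' hB'pos.ne']
    simp [Nat.factorization_eq_zero_of_not_dvd hqB']
  set v := g.factorization q with hvdef
  set h := g / q ^ v with hhdef
  have hgsplit : q ^ v * h = g := Nat.ordProj_mul_ordCompl_eq_self g q
  have hqh : ¬ q ∣ h := Nat.not_dvd_ordCompl hq hg.ne'
  have hqvpos : 0 < q ^ v := pow_pos hq.pos v
  have hX : A / q ^ A.factorization q = h * A' := by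
    rw [hfA, hA'', ← hgsplit, mul_assoc]
    exact Nat.mul_div_cancel_left _ hqvpos
  have hY : B / q ^ B.factorization q = h * B' := by
    rw [hfB, hB'', ← hgsplit, mul_assoc]
    exact Nat.mul_div_cancel_left _ hqvpos
  have hqX : ¬ q ∣ h * A' := by
    intro hd
    rcases (Nat.Prime.dvd_mul hq).mp hd with h' | h'
    exacts [hqh h', hqA' h']
  have hqY : ¬ q ∣ h * B' := by
    intro hd
    rcases (Nat.Prime.dvd_mul hq).mp hd with h' | h'
    exacts [hqh h', hqB' h']
  refine ⟨q, hq, ?_, ?_, ?_, ?_⟩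
  · -- q ∣ A^2 + B^2 - A*B = g^2 * W
    have hle : A * B ≤ A ^ 2 + B ^ 2 := mul_le_sq_add_sq A B
    have heq : A ^ 2 + B ^ 2 - A * B = g ^ 2 * W := by
      have hZ : ((A ^ 2 + B ^ 2 - A * B : ℕ) : ℤ) = ((g ^ 2 * W : ℕ) : ℤ) := by
        push_cast [Nat.cast_sub hle]
        rw [hWcast, hA'', hB'']
        push_cast
        ring
      exact_mod_cast hZ
    rw [heq]
    exact Dvd.dvd.mul_left hqW _
  · rw [hX]; exact hqX
  · rw [hY]; exact hqY
  · rw [hX, hY]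
    have hle2 : (h * A') * (h * B') ≤ (h * A') ^ 2 + (h * B') ^ 2 :=
      mul_le_sq_add_sq _ _
    have heq2 : (h * A') ^ 2 + (h * B') ^ 2 - (h * A') * (h * B') = h ^ 2 * W := by
      have hZ : (((h * A') ^ 2 + (h * B') ^ 2 - (h * A') * (h * B') : ℕ) : ℤ)
          = ((h ^ 2 * W : ℕ) : ℤ) := by
        push_cast [Nat.cast_sub hle2]
        rw [hWcast]
        ring
      exact_mod_cast hZ
    have hdvd : q ∣ (h * A') ^ 2 + (h * B') ^ 2 - (h * A') * (h * B') := by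
      rw [heq2]
      exact Dvd.dvd.mul_left hqW _
    have hz : (((h * A') ^ 2 + (h * B') ^ 2 - (h * A') * (h * B') : ℕ) : ZMod q) = 0 := by
      rw [ZMod.natCast_eq_zero_iff]
      exact hdvd
    push_cast [Nat.cast_sub hle2] at hz ⊢
    linear_combination hz


private lemma final_log (n ω : ℕ) (hn : 1 ≤ n) (hcard : n ≤ 2 ^ ω) :
    ((ω : ℝ)) > (Real.log (n : ℝ) - Real.log 38) / (2 * Real.log 3) := by
  have hlog3 : (0 : ℝ) < Real.log 3 := Real.log_pos (by norm_num)
  have hlog38 : (0 : ℝ) < Real.log 38 := Real.log_pos (by norm_num)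
  have hn1 : (1 : ℝ) ≤ (n : ℝ) := by exact_mod_cast hn
  rw [gt_iff_lt, div_lt_iff₀ (by positivity)]
  have h1 : Real.log (n : ℝ) ≤ (ω : ℝ) * Real.log 2 := by
    have hle : ((n : ℕ) : ℝ) ≤ ((2 : ℝ) ^ ω) := by exact_mod_cast hcard
    calc Real.log (n : ℝ) ≤ Real.log ((2 : ℝ) ^ ω) := Real.log_le_log (by linarith) hle
      _ = (ω : ℝ) * Real.log 2 := Real.log_pow _ _
  have h2 : Real.log 2 ≤ 2 * Real.log 3 := by
    have h' : Real.log 2 ≤ Real.log 9 := Real.log_le_log (by norm_num) (by norm_num)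
    have h9 : Real.log 9 = 2 * Real.log 3 := by
      rw [show (9 : ℝ) = 3 ^ 2 by norm_num, Real.log_pow]
      norm_num
    linarith
  have hω : (0 : ℝ) ≤ (ω : ℝ) := by positivity
  nlinarith [mul_le_mul_of_nonneg_left h2 hω]

theorem stmt_13 (𝒜 : Finset ℤ) (hpos : ∀ a ∈ 𝒜, 0 < a) (hne : 𝒜.Nonempty) :
    (((∏ q ∈ 𝒜.offDiag, (q.1 ^ 2 - q.1 * q.2 + q.2 ^ 2)).natAbs.primeFactors.card : ℝ)) >
      (Real.log (𝒜.card : ℝ) - Real.log 38) / (2 * Real.log 3) := by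
  classical
  set P : ℤ := ∏ q ∈ 𝒜.offDiag, (q.1 ^ 2 - q.1 * q.2 + q.2 ^ 2) with hPdef
  set S : Finset ℕ := P.natAbs.primeFactors with hSdef
  have hPpos : 0 < P := by
    rw [hPdef]
    apply Finset.prod_pos
    intro p hp
    obtain ⟨hp1, hp2, -⟩ := Finset.mem_offDiag.mp hp
    nlinarith [mul_pos (hpos p.1 hp1) (hpos p.2 hp2), sq_nonneg (p.1 - p.2)]
  -- choose colorings
  have hcolor : ∀ s : {x // x ∈ S}, ∃ c : ZMod s.1 → Bool,
      ∀ x y : ZMod s.1, x ≠ 0 → y ≠ 0 → x ^ 2 - x * y + y ^ 2 = 0 → c x ≠ c y :=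
    fun s => exists_coloring s.1 (Nat.prime_of_mem_primeFactors s.2)
  choose C hC using hcolor
  set Φ : ℤ → ({x // x ∈ S} → Bool) :=
    fun a s => C s ((a.natAbs / s.1 ^ a.natAbs.factorization s.1 : ℕ) : ZMod s.1) with hΦdef
  -- injectivity
  have hinj : Set.InjOn Φ ↑𝒜 := by
    intro a ha' b hb' heq
    by_contra hab
    have ha : a ∈ 𝒜 := Finset.mem_coe.mp ha'
    have hb : b ∈ 𝒜 := Finset.mem_coe.mp hb'
    have hapos := hpos a ha
    have hbpos := hpos b hb
    set A := a.natAbs with hAdef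
    set B := b.natAbs with hBdef
    have haA : ((A : ℕ) : ℤ) = a := Int.natAbs_of_nonneg hapos.le
    have hbB : ((B : ℕ) : ℤ) = b := Int.natAbs_of_nonneg hbpos.le
    have hA : 0 < A := Int.natAbs_pos.mpr hapos.ne'
    have hB : 0 < B := Int.natAbs_pos.mpr hbpos.ne'
    have hABne : A ≠ B := by
      intro h
      apply hab
      rw [← haA, ← hbB, h]
    obtain ⟨q, hq, hqFN, hqX, hqY, heqn⟩ := key_arith A B hA hB hABne
    haveI : NeZero q := ⟨hq.ne_zero⟩
    -- q ∈ S
    have hFNeq : ((A ^ 2 + B ^ 2 - A * B : ℕ) : ℤ) = a ^ 2 - a * b + b ^ 2 := by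
      push_cast [Nat.cast_sub (mul_le_sq_add_sq A B)]
      rw [haA, hbB]
      ring
    have hFdvdP : (a ^ 2 - a * b + b ^ 2) ∣ P := by
      rw [hPdef]
      have hmem : ((a, b) : ℤ × ℤ) ∈ 𝒜.offDiag := Finset.mem_offDiag.mpr ⟨ha, hb, hab⟩
      exact Finset.dvd_prod_of_mem (fun q : ℤ × ℤ => q.1 ^ 2 - q.1 * q.2 + q.2 ^ 2) hmem
    have hqS : q ∈ S := by
      rw [hSdef]
      refine Nat.mem_primeFactors.mpr ⟨hq, ?_, Int.natAbs_ne_zero.mpr hPpos.ne'⟩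
      refine dvd_trans hqFN ?_
      have h1 : (A ^ 2 + B ^ 2 - A * B : ℕ) = (a ^ 2 - a * b + b ^ 2).natAbs := by
        rw [← hFNeq, Int.natAbs_natCast]
      rw [h1]
      exact Int.natAbs_dvd_natAbs.mpr hFdvdP
    -- contradiction via the coloring
    have hxne : ((A / q ^ A.factorization q : ℕ) : ZMod q) ≠ 0 := by
      intro h0
      exact hqX ((ZMod.natCast_eq_zero_iff _ q).mp h0)
    have hyne : ((B / q ^ B.factorization q : ℕ) : ZMod q) ≠ 0 := by
      intro h0
      exact hqY ((ZMod.natCast_eq_zero_iff _ q).mp h0)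
    have hdiff := hC ⟨q, hqS⟩ _ _ hxne hyne heqn
    apply hdiff
    have := congrFun heq ⟨q, hqS⟩
    exact this
  -- cardinality bound
  have hcard : 𝒜.card ≤ 2 ^ S.card := by
    have h1 : 𝒜.card ≤ (Finset.univ : Finset ({x // x ∈ S} → Bool)).card :=
      Finset.card_le_card_of_injOn Φ (fun a _ => Finset.mem_univ _) hinj
    rwa [Finset.card_univ, Fintype.card_fun, Fintype.card_bool, Fintype.card_coe] at h1
  exact final_log _ _ (Finset.card_pos.mpr hne) hcard
end

section
/- If 𝒜 ⊆ ℤ⁺ is a finite nonempty set, then the number of distinct rational primes dividing ∏_{a,b ∈ 𝒜, a ≠ b} (a² + ab + b²) is strictly greater than (log|𝒜| − log 146)/(2·log 3). -/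
open Finset

/-- Rank of `x` within the fiber of cubes mod `p`. -/
def rnk (p x : ℕ) : ℕ :=
  ((Finset.range p).filter (fun z => z ^ 3 % p = x ^ 3 % p ∧ z < x)).card

/-- Color of `a` at the prime `p`. -/
def chi (p a : ℕ) : ℕ := rnk p ((a / p ^ (a.factorization p)) % p)

lemma rnk_lt_rnk (p x y : ℕ) (hy : y < p) (hxy : x < y)
    (hc : x ^ 3 % p = y ^ 3 % p) : rnk p x < rnk p y := by
  apply Finset.card_lt_card
  rw [Finset.ssubset_iff_of_subset]
  · refine ⟨x, ?_, ?_⟩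
    · simp only [Finset.mem_filter, Finset.mem_range]
      exact ⟨lt_trans hxy hy, hc, hxy⟩
    · simp only [Finset.mem_filter, Finset.mem_range]
      rintro ⟨-, -, h⟩; exact lt_irrefl x h
  · intro z hz
    simp only [Finset.mem_filter, Finset.mem_range] at hz ⊢
    exact ⟨hz.1, hz.2.1.trans hc, hz.2.2.trans hxy⟩

lemma rnk_ne (p x y : ℕ) (hx : x < p) (hy : y < p) (hxy : x ≠ y)
    (hc : x ^ 3 % p = y ^ 3 % p) : rnk p x ≠ rnk p y := by
  rcases lt_or_gt_of_ne hxy with h | h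
  · exact ne_of_lt (rnk_lt_rnk p x y hy h hc)
  · exact ne_of_gt (rnk_lt_rnk p y x hx h hc.symm)

lemma chi_lt_three (p a : ℕ) (hp : p.Prime) : chi p a < 3 := by
  haveI : Fact p.Prime := ⟨hp⟩
  set x := (a / p ^ (a.factorization p)) % p with hxdef
  have hxp : x < p := Nat.mod_lt _ hp.pos
  have hsub : ((Finset.range p).filter (fun z => z ^ 3 % p = x ^ 3 % p ∧ z < x))
      ⊆ (((Finset.range p).filter (fun z => z ^ 3 % p = x ^ 3 % p)).erase x) := by
    intro z hz
    simp only [Finset.mem_filter, Finset.mem_range, Finset.mem_erase] at hz ⊢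
    exact ⟨ne_of_lt hz.2.2, hz.1, hz.2.1⟩
  have hfib : ((Finset.range p).filter (fun z => z ^ 3 % p = x ^ 3 % p)).card ≤ 3 := by
    have hinj : Set.InjOn (fun z : ℕ => (z : ZMod p))
        ((Finset.range p).filter (fun z => z ^ 3 % p = x ^ 3 % p)) := by
      intro z hz w hw h
      simp only [Finset.coe_filter, Set.mem_setOf_eq, Finset.mem_range] at hz hw
      have := congrArg ZMod.val h
      rwa [ZMod.val_natCast, ZMod.val_natCast, Nat.mod_eq_of_lt hz.1,
        Nat.mod_eq_of_lt hw.1] at this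
    have hmap : ∀ z ∈ ((Finset.range p).filter (fun z => z ^ 3 % p = x ^ 3 % p)),
        (z : ZMod p) ∈ (Polynomial.nthRoots 3 ((x : ZMod p) ^ 3)).toFinset := by
      intro z hz
      simp only [Finset.mem_filter, Finset.mem_range] at hz
      rw [Multiset.mem_toFinset, Polynomial.mem_nthRoots (by norm_num : 0 < 3)]
      have : ((z ^ 3 : ℕ) : ZMod p) = ((x ^ 3 : ℕ) : ZMod p) := by
        rw [ZMod.natCast_eq_natCast_iff]; exact hz.2
      push_cast at this; exact this
    calc ((Finset.range p).filter (fun z => z ^ 3 % p = x ^ 3 % p)).card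
        ≤ (Polynomial.nthRoots 3 ((x : ZMod p) ^ 3)).toFinset.card :=
          Finset.card_le_card_of_injOn _ hmap hinj
      _ ≤ Multiset.card (Polynomial.nthRoots 3 ((x : ZMod p) ^ 3)) :=
          Multiset.toFinset_card_le _
      _ ≤ 3 := Polynomial.card_nthRoots 3 _
  have hxmem : x ∈ (Finset.range p).filter (fun z => z ^ 3 % p = x ^ 3 % p) := by
    simp only [Finset.mem_filter, Finset.mem_range]; exact ⟨hxp, trivial⟩
  have := Finset.card_le_card hsub
  rw [Finset.card_erase_of_mem hxmem] at this
  have h1 : 1 ≤ ((Finset.range p).filter (fun z => z ^ 3 % p = x ^ 3 % p)).card :=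
    Finset.card_pos.mpr ⟨x, hxmem⟩
  have hch : chi p a = rnk p x := rfl
  rw [hch]
  unfold rnk
  omega

/-- finite check mod 9 -/
lemma mod9_check : ∀ r s : Fin 9, 3 ∣ ((r : ℕ) ^ 2 + r * s + s ^ 2) →
    ¬(3 ∣ (r : ℕ) ∧ 3 ∣ (s : ℕ)) → ((r : ℕ) ^ 2 + r * s + s ^ 2) % 9 = 3 := by decide

/-- Every `a² + ab + b²` with `a ≠ b` coprime positive has a prime factor `≡ 1 mod 3`. -/
lemma lemA (a b : ℕ) (ha : 0 < a) (hb : 0 < b) (hab : a ≠ b) (hco : Nat.Coprime a b) :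
    ∃ p : ℕ, p.Prime ∧ p % 3 = 1 ∧ p ∣ (a ^ 2 + a * b + b ^ 2) := by
  set F := a ^ 2 + a * b + b ^ 2 with hF
  have hF7 : 7 ≤ F := by
    rw [hF]
    rcases lt_or_gt_of_ne hab with h | h
    · have h1 : 1 ≤ a := ha
      have h2 : 2 ≤ b := by omega
      nlinarith [Nat.mul_le_mul h1 h2, Nat.mul_le_mul h2 h2, Nat.mul_le_mul h1 h1]
    · have h1 : 1 ≤ b := hb
      have h2 : 2 ≤ a := by omega
      nlinarith [Nat.mul_le_mul h2 h1, Nat.mul_le_mul h2 h2, Nat.mul_le_mul h1 h1]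
  by_contra hcon
  push_neg at hcon
  -- every prime factor of F equals 3
  have claim : ∀ q : ℕ, q.Prime → q ∣ F → q = 3 := by
    intro q hq hqF
    by_contra hq3
    haveI : Fact q.Prime := ⟨hq⟩
    have hq3' : ((3 : ℕ) : ZMod q) ≠ 0 := by
      intro h
      have h2 := (ZMod.natCast_eq_zero_iff 3 q).mp h
      exact hq3 ((Nat.prime_dvd_prime_iff_eq hq Nat.prime_three).mp h2)
    have hFq : ((a : ZMod q)) ^ 2 + a * b + b ^ 2 = 0 := by
      have : ((F : ℕ) : ZMod q) = 0 := (ZMod.natCast_eq_zero_iff _ _).mpr hqF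
      rw [hF] at this; push_cast at this; linear_combination this
    have hnotboth : ¬ (q ∣ a ∧ q ∣ b) := by
      rintro ⟨h1, h2⟩
      have : q ∣ Nat.gcd a b := Nat.dvd_gcd h1 h2
      rw [hco] at this
      exact hq.one_lt.ne' (Nat.dvd_one.mp this)
    have hA0 : ((a : ℕ) : ZMod q) ≠ 0 := by
      intro hA
      apply hnotboth
      have hB : ((b : ℕ) : ZMod q) = 0 := by
        have h2 : ((b : ZMod q)) ^ 2 = 0 := by rw [hA] at hFq; linear_combination hFq
        exact pow_eq_zero_iff (by norm_num) |>.mp h2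
      exact ⟨(ZMod.natCast_eq_zero_iff _ _).mp hA,
        (ZMod.natCast_eq_zero_iff _ _).mp hB⟩
    have hB0 : ((b : ℕ) : ZMod q) ≠ 0 := by
      intro hB
      apply hnotboth
      have hA : ((a : ZMod q)) = 0 := by
        have h2 : ((a : ZMod q)) ^ 2 = 0 := by rw [hB] at hFq; linear_combination hFq
        exact pow_eq_zero_iff (by norm_num) |>.mp h2
      exact ⟨(ZMod.natCast_eq_zero_iff _ _).mp hA,
        (ZMod.natCast_eq_zero_iff _ _).mp hB⟩
    -- x = a/b has order 3
    set x : ZMod q := (a : ZMod q) * (b : ZMod q)⁻¹ with hxdef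
    have hx : x ^ 2 + x + 1 = 0 := by
      have hb2 : ((b : ZMod q)) * (b : ZMod q)⁻¹ = 1 := mul_inv_cancel₀ hB0
      rw [hxdef]
      linear_combination ((b : ZMod q)⁻¹) ^ 2 * hFq - ((a : ZMod q) * (b : ZMod q)⁻¹ + (b : ZMod q) * (b : ZMod q)⁻¹ + 1) * hb2
    have hx1 : x ≠ 1 := by
      intro h
      rw [h] at hx
      apply hq3'
      push_cast
      linear_combination hx
    have hx0 : x ≠ 0 := by
      intro h
      rw [h] at hx
      simp at hx
    have hx3 : x ^ 3 = 1 := by linear_combination (x - 1) * hx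
    set u : (ZMod q)ˣ := Units.mk0 x hx0 with hudef
    have hu3 : u ^ 3 = 1 := by
      ext
      rw [Units.val_pow_eq_pow_val]
      simpa [hudef] using hx3
    have hord : orderOf u = 3 := by
      have hdvd : orderOf u ∣ 3 := orderOf_dvd_of_pow_eq_one hu3
      rcases (Nat.prime_three).eq_one_or_self_of_dvd _ hdvd with h | h
      · exfalso
        apply hx1
        have hu1 : u = 1 := orderOf_eq_one_iff.mp h
        have hv : (u : ZMod q) = 1 := by rw [hu1]; simp
        rw [hudef] at hv
        simpa using hv
      · exact h
    have hcard : orderOf u ∣ q - 1 := by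
      rw [← ZMod.card_units q]
      exact orderOf_dvd_card
    rw [hord] at hcard
    have hq2 : 2 ≤ q := hq.two_le
    have : q % 3 = 1 := by omega
    exact hcon q hq this hqF
  -- hence 3 ∣ F
  have h3F : 3 ∣ F := by
    obtain ⟨q, hq, hqF⟩ := Nat.exists_prime_and_dvd (show F ≠ 1 by omega)
    rw [← claim q hq hqF]; exact hqF
  have hnotboth3 : ¬ (3 ∣ a ∧ 3 ∣ b) := by
    rintro ⟨h1, h2⟩
    have : 3 ∣ Nat.gcd a b := Nat.dvd_gcd h1 h2
    rw [hco] at this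
    omega
  -- F ≡ 3 mod 9
  have hmodF : F ≡ (a % 9) ^ 2 + (a % 9) * (b % 9) + (b % 9) ^ 2 [MOD 9] := by
    have h1 : a % 9 ≡ a [MOD 9] := Nat.mod_modEq a 9
    have h2 : b % 9 ≡ b [MOD 9] := Nat.mod_modEq b 9
    exact (((h1.pow 2).add (h1.mul h2)).add (h2.pow 2)).symm
  have hF9 : F % 9 = 3 := by
    have hr : a % 9 < 9 := Nat.mod_lt _ (by norm_num)
    have hs : b % 9 < 9 := Nat.mod_lt _ (by norm_num)
    have h3r : 3 ∣ (a % 9) ↔ 3 ∣ a := Nat.dvd_mod_iff (by norm_num)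
    have h3s : 3 ∣ (b % 9) ↔ 3 ∣ b := Nat.dvd_mod_iff (by norm_num)
    have key := mod9_check ⟨a % 9, hr⟩ ⟨b % 9, hs⟩
    simp only [Fin.val_mk] at key
    have h9 : F % 9 = ((a % 9) ^ 2 + (a % 9) * (b % 9) + (b % 9) ^ 2) % 9 := hmodF
    have h3F' : 3 ∣ ((a % 9) ^ 2 + (a % 9) * (b % 9) + (b % 9) ^ 2) := by
      have hd : (3:ℕ) ∣ F % 9 := (Nat.dvd_mod_iff (show (3:ℕ) ∣ 9 by norm_num)).mpr h3F
      rw [h9] at hd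
      exact (Nat.dvd_mod_iff (show (3:ℕ) ∣ 9 by norm_num)).mp hd
    have := key h3F' (by rw [h3r, h3s]; exact hnotboth3)
    omega
  -- contradiction: F/3 has a prime factor, which must be 3, so 9 ∣ F
  obtain ⟨q, hq, hqF3⟩ := Nat.exists_prime_and_dvd (show F / 3 ≠ 1 by omega)
  have hqF : q ∣ F := hqF3.trans (Nat.div_dvd_of_dvd h3F)
  have hq3 : q = 3 := claim q hq hqF
  subst hq3
  have : 9 ∣ F := by
    obtain ⟨m, hm⟩ := hqF3
    obtain ⟨n, hn⟩ := h3F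
    rw [hn] at hm ⊢
    rw [Nat.mul_div_cancel_left _ (by norm_num : 0 < 3)] at hm
    exact ⟨m, by omega⟩
  omega


/-- For distinct positive `a b`, there is a prime `p` dividing `a²+ab+b²` at which the
colors of `a` and `b` differ. -/
lemma key_chi (a b : ℕ) (ha : 0 < a) (hb : 0 < b) (hab : a ≠ b) :
    ∃ p : ℕ, p.Prime ∧ p ∣ (a ^ 2 + a * b + b ^ 2) ∧ chi p a ≠ chi p b := by
  set g := Nat.gcd a b with hg
  have hg0 : 0 < g := Nat.gcd_pos_of_pos_left _ ha
  set a' := a / g with ha'def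
  set b' := b / g with hb'def
  have haa : a = g * a' := (Nat.mul_div_cancel' (Nat.gcd_dvd_left a b)).symm
  have hbb : b = g * b' := (Nat.mul_div_cancel' (Nat.gcd_dvd_right a b)).symm
  have hco : Nat.Coprime a' b' := Nat.coprime_div_gcd_div_gcd hg0
  have ha0' : 0 < a' := by
    rcases Nat.eq_zero_or_pos a' with h | h
    · rw [h, mul_zero] at haa; omega
    · exact h
  have hb0' : 0 < b' := by
    rcases Nat.eq_zero_or_pos b' with h | h
    · rw [h, mul_zero] at hbb; omega
    · exact h
  have hne' : a' ≠ b' := fun h => hab (by rw [haa, hbb, h])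
  obtain ⟨p, hp, hp3, hpF'⟩ := lemA a' b' ha0' hb0' hne' hco
  haveI : Fact p.Prime := ⟨hp⟩
  have hp3ne : p ≠ 3 := by intro h; rw [h] at hp3; norm_num at hp3
  have hpa' : ¬ p ∣ a' := by
    intro h
    have h1 : p ∣ a' ^ 2 + a' * b' := dvd_add (dvd_pow h (by norm_num)) (h.mul_right b')
    have hsub : a' ^ 2 + a' * b' + b' ^ 2 - (a' ^ 2 + a' * b') = b' ^ 2 :=
      Nat.add_sub_cancel_left (a' ^ 2 + a' * b') (b' ^ 2)
    have h2 : p ∣ b' ^ 2 := hsub ▸ Nat.dvd_sub hpF' h1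
    have h3 : p ∣ b' := hp.dvd_of_dvd_pow h2
    have h4 : p ∣ Nat.gcd a' b' := Nat.dvd_gcd h h3
    rw [hco] at h4
    exact hp.one_lt.ne' (Nat.dvd_one.mp h4)
  have hpb' : ¬ p ∣ b' := by
    intro h
    have h1 : p ∣ a' * b' + b' ^ 2 := dvd_add (h.mul_left a') (dvd_pow h (by norm_num))
    have heq : a' ^ 2 + a' * b' + b' ^ 2 = a' ^ 2 + (a' * b' + b' ^ 2) := by ring
    have hsub : a' ^ 2 + (a' * b' + b' ^ 2) - (a' * b' + b' ^ 2) = a' ^ 2 :=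
      Nat.add_sub_cancel (a' ^ 2) (a' * b' + b' ^ 2)
    have h2 : p ∣ a' ^ 2 := hsub ▸ Nat.dvd_sub (heq ▸ hpF') h1
    have h3 : p ∣ a' := hp.dvd_of_dvd_pow h2
    have h4 : p ∣ Nat.gcd a' b' := Nat.dvd_gcd h3 h
    rw [hco] at h4
    exact hp.one_lt.ne' (Nat.dvd_one.mp h4)
  -- valuations
  have hga : a.factorization p = g.factorization p := by
    rw [haa, Nat.factorization_mul hg0.ne' ha0'.ne']
    simp [Nat.factorization_eq_zero_of_not_dvd hpa']
  have hgb : b.factorization p = g.factorization p := by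
    rw [hbb, Nat.factorization_mul hg0.ne' hb0'.ne']
    simp [Nat.factorization_eq_zero_of_not_dvd hpb']
  set v := g.factorization p with hv
  obtain ⟨g₂, hg2⟩ : p ^ v ∣ g := Nat.ordProj_dvd g p
  have hpg2 : ¬ p ∣ g₂ := by
    have h1 := Nat.not_dvd_ordCompl hp hg0.ne'
    have h2 : g / p ^ v = g₂ := by rw [hg2, Nat.mul_div_cancel_left _ (pow_pos hp.pos v)]
    rwa [h2] at h1
  have hdiva : a / p ^ (a.factorization p) = g₂ * a' := by
    rw [hga, haa, hg2, mul_assoc, Nat.mul_div_cancel_left _ (pow_pos hp.pos v)]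
  have hdivb : b / p ^ (b.factorization p) = g₂ * b' := by
    rw [hgb, hbb, hg2, mul_assoc, Nat.mul_div_cancel_left _ (pow_pos hp.pos v)]
  -- ZMod facts
  have hFq : ((a' : ZMod p)) ^ 2 + (a' : ZMod p) * (b' : ZMod p) + (b' : ZMod p) ^ 2 = 0 := by
    have h0 : (((a' ^ 2 + a' * b' + b' ^ 2 : ℕ)) : ZMod p) = 0 :=
      (ZMod.natCast_eq_zero_iff _ _).mpr hpF'
    push_cast at h0
    linear_combination h0
  have hA0 : ((a' : ℕ) : ZMod p) ≠ 0 := fun h =>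
    hpa' ((ZMod.natCast_eq_zero_iff _ _).mp h)
  have hB0 : ((b' : ℕ) : ZMod p) ≠ 0 := fun h =>
    hpb' ((ZMod.natCast_eq_zero_iff _ _).mp h)
  have hG0 : ((g₂ : ℕ) : ZMod p) ≠ 0 := fun h =>
    hpg2 ((ZMod.natCast_eq_zero_iff _ _).mp h)
  have hp3Z : ((3 : ℕ) : ZMod p) ≠ 0 := by
    intro h
    have := (ZMod.natCast_eq_zero_iff 3 p).mp h
    exact hp3ne ((Nat.prime_dvd_prime_iff_eq hp Nat.prime_three).mp this)
  have hAB : ((a' : ℕ) : ZMod p) ≠ ((b' : ℕ) : ZMod p) := by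
    intro h
    have h3B : ((3 : ℕ) : ZMod p) * ((b' : ℕ) : ZMod p) ^ 2 = 0 := by
      rw [h] at hFq
      push_cast
      linear_combination hFq
    rcases mul_eq_zero.mp h3B with h' | h'
    · exact hp3Z h'
    · exact hB0 (pow_eq_zero_iff (by norm_num) |>.mp h')
  have hcube : (((g₂ : ℕ) : ZMod p) * (a' : ZMod p)) ^ 3
      = (((g₂ : ℕ) : ZMod p) * (b' : ZMod p)) ^ 3 := by
    have hc : ((a' : ℕ) : ZMod p) ^ 3 = ((b' : ℕ) : ZMod p) ^ 3 := by
      linear_combination ((a' : ZMod p) - (b' : ZMod p)) * hFq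
    calc (((g₂ : ℕ) : ZMod p) * (a' : ZMod p)) ^ 3
        = ((g₂ : ℕ) : ZMod p) ^ 3 * ((a' : ℕ) : ZMod p) ^ 3 := by ring
      _ = ((g₂ : ℕ) : ZMod p) ^ 3 * ((b' : ℕ) : ZMod p) ^ 3 := by rw [hc]
      _ = (((g₂ : ℕ) : ZMod p) * (b' : ZMod p)) ^ 3 := by ring
  have hGAB : ((g₂ * a' : ℕ) : ZMod p) ≠ ((g₂ * b' : ℕ) : ZMod p) := by
    push_cast
    intro h
    exact hAB (mul_left_cancel₀ hG0 h)
  -- back to ℕ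
  set x := (g₂ * a') % p with hxdef
  set y := (g₂ * b') % p with hydef
  have hxy : x ≠ y := by
    intro h
    apply hGAB
    rw [ZMod.natCast_eq_natCast_iff']
    exact h
  have hxc : (x : ZMod p) = ((g₂ * a' : ℕ) : ZMod p) := by rw [hxdef, ZMod.natCast_mod]
  have hyc : (y : ZMod p) = ((g₂ * b' : ℕ) : ZMod p) := by rw [hydef, ZMod.natCast_mod]
  have hcn : x ^ 3 % p = y ^ 3 % p := by
    have : ((x ^ 3 : ℕ) : ZMod p) = ((y ^ 3 : ℕ) : ZMod p) := by
      push_cast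
      rw [hxc, hyc]
      push_cast
      exact hcube
    rwa [ZMod.natCast_eq_natCast_iff'] at this
  refine ⟨p, hp, ?_, ?_⟩
  · have heq : a ^ 2 + a * b + b ^ 2 = g ^ 2 * (a' ^ 2 + a' * b' + b' ^ 2) := by
      rw [haa, hbb]; ring
    rw [heq]
    exact hpF'.mul_left _
  · have hch1 : chi p a = rnk p x := by rw [chi, hdiva]
    have hch2 : chi p b = rnk p y := by rw [chi, hdivb]
    rw [hch1, hch2]
    exact rnk_ne p x y (Nat.mod_lt _ hp.pos) (Nat.mod_lt _ hp.pos) hxy hcn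

theorem stmt_14 (𝒜 : Finset ℕ) (hpos : ∀ a ∈ 𝒜, 0 < a) (hne : 𝒜.Nonempty) :
    (((∏ q ∈ 𝒜.offDiag, (q.1 ^ 2 + q.1 * q.2 + q.2 ^ 2)).primeFactors.card : ℝ)) >
      (Real.log (𝒜.card : ℝ) - Real.log 146) / (2 * Real.log 3) := by
  classical
  set P := ∏ q ∈ 𝒜.offDiag, (q.1 ^ 2 + q.1 * q.2 + q.2 ^ 2) with hP
  have hP0 : P ≠ 0 := by
    rw [hP]
    rw [Finset.prod_ne_zero_iff]
    intro q hq
    have h1 := hpos q.1 (Finset.mem_offDiag.mp hq).1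
    positivity
  set S := P.primeFactors with hS
  have hcard : 𝒜.card ≤ 3 ^ S.card := by
    have hinj : Function.Injective (fun (a : {x // x ∈ 𝒜}) =>
        (fun (p : {x // x ∈ S}) =>
          (⟨chi p.val a.val, chi_lt_three _ _ (Nat.prime_of_mem_primeFactors p.2)⟩ : Fin 3))) := by
      intro a b hab
      by_contra hne'
      have hne'' : (a : ℕ) ≠ (b : ℕ) := fun h => hne' (Subtype.ext h)
      obtain ⟨p, hp, hpdvd, hchi⟩ := key_chi a b (hpos _ a.2) (hpos _ b.2) hne''
      have hpP : p ∈ S := by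
        rw [hS, Nat.mem_primeFactors]
        refine ⟨hp, dvd_trans hpdvd ?_, hP0⟩
        rw [hP]
        have hmem : ((a : ℕ), (b : ℕ)) ∈ 𝒜.offDiag := Finset.mem_offDiag.mpr ⟨a.2, b.2, hne''⟩
        exact Finset.dvd_prod_of_mem (fun q => q.1 ^ 2 + q.1 * q.2 + q.2 ^ 2) hmem
      have h2 := congrFun hab ⟨p, hpP⟩
      exact hchi (by simpa using congrArg Fin.val h2)
    calc 𝒜.card = Fintype.card {x // x ∈ 𝒜} := (Fintype.card_coe 𝒜).symm
      _ ≤ Fintype.card ({x // x ∈ S} → Fin 3) := Fintype.card_le_of_injective _ hinj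
      _ = 3 ^ S.card := by rw [Fintype.card_fun]; simp [Fintype.card_coe]
  have h1n : 1 ≤ 𝒜.card := Finset.card_pos.mpr hne
  have hlog3 : 0 < Real.log 3 := Real.log_pos (by norm_num)
  have hlog146 : 0 < Real.log 146 := Real.log_pos (by norm_num)
  rw [gt_iff_lt, div_lt_iff₀ (by positivity)]
  have hlogn : Real.log (𝒜.card : ℝ) ≤ (S.card : ℝ) * Real.log 3 := by
    have hcast : ((𝒜.card : ℕ) : ℝ) ≤ (3 : ℝ) ^ S.card := by
      calc ((𝒜.card : ℕ) : ℝ) ≤ ((3 ^ S.card : ℕ) : ℝ) := Nat.cast_le.mpr hcard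
        _ = (3 : ℝ) ^ S.card := by push_cast; ring
    calc Real.log (𝒜.card : ℝ)
        ≤ Real.log ((3 : ℝ) ^ S.card) := Real.log_le_log (by exact_mod_cast h1n) hcast
      _ = (S.card : ℝ) * Real.log 3 := Real.log_pow _ _
  nlinarith [mul_nonneg (Nat.cast_nonneg (α := ℝ) S.card) hlog3.le]
end

section
/- Let E = ℤ[ω], θ ∈ E a prime, and γ a positive integer; set ρ = −θ^γ. For any finite set 𝒜 ⊆ E there exists ℬ ⊆ 𝒜 with |ℬ| ≥ |𝒜|/2 such that for all distinct a, b ∈ ℬ and every natural number k: if θ^k divides a + ρb (= a − θ^γ b), then θ^{k−γ} divides both a and b. -/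
theorem stmt_19 (θ : E) (hθ : Prime θ) (γ : ℕ) (hγ : 0 < γ) (𝒜 : Finset E) :
    ∃ ℬ ⊆ 𝒜, (𝒜.card : ℝ) / 2 ≤ (ℬ.card : ℝ) ∧
      ∀ a ∈ ℬ, ∀ b ∈ ℬ, a ≠ b → ∀ k : ℕ,
        θ ^ k ∣ a + (-θ ^ γ) * b → θ ^ (k - γ) ∣ a ∧ θ ^ (k - γ) ∣ b := by
  haveI : IsNoetherianRing E := is_noetherian_subring_closure _ (Set.finite_singleton ω)
  haveI : WfDvdMonoid E := IsNoetherianRing.wfDvdMonoid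
  have hθ0 : (θ : E) ≠ 0 := hθ.ne_zero
  set v : E → ℕ := fun a => multiplicity θ a with hv
  have hdvd : ∀ a : E, θ ^ v a ∣ a := fun a => pow_multiplicity_dvd θ a
  have hle : ∀ a : E, a ≠ 0 → ∀ k : ℕ, θ ^ k ∣ a → k ≤ v a := by
    intro a ha k hk
    by_contra h
    exact (FiniteMultiplicity.of_prime_left hθ ha).not_pow_dvd_of_multiplicity_lt
      (lt_of_not_ge h) hk
  -- the two classes
  classical
  set B : ℕ → Finset E := fun i => 𝒜.filter (fun a => a = 0 ∨ (v a / γ) % 2 = i) with hB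
  have hcover : 𝒜 ⊆ B 0 ∪ B 1 := by
    intro a ha
    rcases eq_or_ne a 0 with h0 | h0
    · exact Finset.mem_union_left _ (Finset.mem_filter.2 ⟨ha, Or.inl h0⟩)
    · rcases Nat.mod_two_eq_zero_or_one (v a / γ) with h | h
      · exact Finset.mem_union_left _ (Finset.mem_filter.2 ⟨ha, Or.inr h⟩)
      · exact Finset.mem_union_right _ (Finset.mem_filter.2 ⟨ha, Or.inr h⟩)
    -- main property holds for each class
  have main : ∀ i, ∀ a ∈ B i, ∀ b ∈ B i, a ≠ b → ∀ k : ℕ,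
      θ ^ k ∣ a + (-θ ^ γ) * b → θ ^ (k - γ) ∣ a ∧ θ ^ (k - γ) ∣ b := by
    intro i a ha b hb hab k hk
    have hk' : θ ^ k ∣ a - θ ^ γ * b := by
      have : a + (-θ ^ γ) * b = a - θ ^ γ * b := by ring
      rwa [this] at hk
    -- helper : θ ^ (γ + m) ∣ θ ^ γ * b → θ ^ m ∣ b
    have cancel : ∀ (m : ℕ) (b : E), θ ^ (γ + m) ∣ θ ^ γ * b → θ ^ m ∣ b := by
      intro m b h
      rw [pow_add] at h
      exact (mul_dvd_mul_iff_left (pow_ne_zero γ hθ0)).1 h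
    rcases eq_or_ne a 0 with ha0 | ha0
    · subst ha0
      have hb0 : b ≠ 0 := fun h => hab (h ▸ rfl)
      constructor
      · exact dvd_zero _
      · rcases le_or_gt k γ with h | h
        · simp [Nat.sub_eq_zero_of_le h]
        · have h1 : θ ^ (γ + (k - γ)) ∣ θ ^ γ * b := by
            have : γ + (k - γ) = k := by omega
            rw [this]
            have := hk'.neg_right
            simp only [zero_sub, neg_neg] at this
            exact this
          exact cancel _ _ h1
    rcases eq_or_ne b 0 with hb0 | hb0
    · subst hb0
      simp only [mul_zero, add_zero, sub_zero] at hk hk'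
      exact ⟨dvd_trans (pow_dvd_pow θ (Nat.sub_le k γ)) hk', dvd_zero _⟩
    -- both nonzero; same class i
    have hpa := (Finset.mem_filter.1 ha).2.resolve_left ha0
    have hpb := (Finset.mem_filter.1 hb).2.resolve_left hb0
    have hne : v a ≠ v b + γ := by
      intro h
      have : (v b + γ) / γ = v b / γ + 1 := Nat.add_div_right _ hγ
      rw [h, this] at hpa
      omega
    -- show k ≤ v a and k ≤ v b + γ
    have key : k ≤ v a ∧ k ≤ v b + γ := by
      rcases lt_or_gt_of_ne hne with hlt | hgt
      · -- v a < v b + γ : show k ≤ v a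
        have hka : k ≤ v a := by
          by_contra h
          push_neg at h
          have h1 : θ ^ (v a + 1) ∣ a - θ ^ γ * b := dvd_trans (pow_dvd_pow θ h) hk'
          have h2 : θ ^ (v a + 1) ∣ θ ^ γ * b :=
            dvd_trans (pow_dvd_pow θ (by omega : v a + 1 ≤ γ + v b))
              (by rw [pow_add]; exact mul_dvd_mul_left _ (hdvd b))
          have : θ ^ (v a + 1) ∣ a := by
            have := dvd_add h1 h2
            simpa using this
          exact absurd (hle a ha0 _ this) (by omega)
        exact ⟨hka, by omega⟩
      · -- v b + γ < v a : show k ≤ v b + γ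
        have hkb : k ≤ v b + γ := by
          by_contra h
          push_neg at h
          have h1 : θ ^ (v b + γ + 1) ∣ a - θ ^ γ * b := dvd_trans (pow_dvd_pow θ h) hk'
          have h2 : θ ^ (v b + γ + 1) ∣ a :=
            dvd_trans (pow_dvd_pow θ (by omega : v b + γ + 1 ≤ v a)) (hdvd a)
          have h3 : θ ^ (γ + (v b + 1)) ∣ θ ^ γ * b := by
            have : θ ^ (v b + γ + 1) ∣ θ ^ γ * b := by
              have := dvd_sub h2 h1
              simpa using this
            have he : γ + (v b + 1) = v b + γ + 1 := by omega
            rwa [he]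
          have : θ ^ (v b + 1) ∣ b := cancel _ _ h3
          exact absurd (hle b hb0 _ this) (by omega)
        exact ⟨by omega, hkb⟩
    constructor
    · exact dvd_trans (pow_dvd_pow θ (by omega : k - γ ≤ v a)) (hdvd a)
    · exact dvd_trans (pow_dvd_pow θ (by omega : k - γ ≤ v b)) (hdvd b)
  -- choose the bigger class
  have hcard : 𝒜.card ≤ (B 0).card + (B 1).card :=
    le_trans (Finset.card_le_card hcover) (Finset.card_union_le _ _)
  rcases le_total ((B 0).card) ((B 1).card) with h | h
  · refine ⟨B 1, Finset.filter_subset _ _, ?_, main 1⟩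
    rw [div_le_iff₀ (by norm_num : (0:ℝ) < 2)]
    have : 𝒜.card ≤ (B 1).card * 2 := by omega
    exact_mod_cast this
  · refine ⟨B 0, Finset.filter_subset _ _, ?_, main 0⟩
    rw [div_le_iff₀ (by norm_num : (0:ℝ) < 2)]
    have : 𝒜.card ≤ (B 0).card * 2 := by omega
    exact_mod_cast this
end
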